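/- Let M be a bounded, strictly positive (or more generally accretive and boundedly invertible) operator on the pivot space H₀ of a quasi Gelfand triple (H₊, H₀, H₋). Then V₁ = I, V₂ = M satisfy: (i) the operator [I|_{H₀∩H₊}, M|_{H₀∩H₋}] from H₊ × H₋ to H₀ is closed and surjective; (ii) ker[V₁ V₂] = {(x,y) : x = −My} is a dissipative linear relation on H₀; (iii) V₁V₂* + V₂V₁* = 2 Re M ≥ 0. -/

import Mathlib

open Filter Topology
open scoped ComplexInnerProductSpace

noncomputable section

/-- A quasi Gelfand triple `(H₊, H₀, H₋)`, encoded by the two embeddings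
`ι₊ : D₊ ⊆ H₊ → H₀` and `ι₋ : D₋ ⊆ H₋ → H₀`: both are injective, closed, densely defined
with dense ranges, and the `H₋`-norm of an element of `D₋` equals the `H₊`-norm of its image
under the adjoint `ι₊*` (which exactly says that `H₋` completes `D₋` under
`‖g‖₋ = sup_{f ∈ D₊} |⟨g, f⟩₀|/‖f‖₊`); moreover `ran ι₋` is all of `dom ι₊*`. -/
structure QuasiGelfandTriple (Hp H₀ Hm : Type*)
    [NormedAddCommGroup Hp] [InnerProductSpace ℂ Hp] [CompleteSpace Hp]
    [NormedAddCommGroup H₀] [InnerProductSpace ℂ H₀] [CompleteSpace H₀]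
    [NormedAddCommGroup Hm] [InnerProductSpace ℂ Hm] [CompleteSpace Hm] where
  ip : Hp →ₗ.[ℂ] H₀
  im : Hm →ₗ.[ℂ] H₀
  ip_dense_dom : Dense (ip.domain : Set Hp)
  im_dense_dom : Dense (im.domain : Set Hm)
  ip_closed : IsClosed {p : Hp × H₀ | ∃ f : ip.domain, (f : Hp) = p.1 ∧ ip f = p.2}
  im_closed : IsClosed {p : Hm × H₀ | ∃ g : im.domain, (g : Hm) = p.1 ∧ im g = p.2}
  ip_injective : ∀ f : ip.domain, ip f = 0 → (f : Hp) = 0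
  im_injective : ∀ g : im.domain, im g = 0 → (g : Hm) = 0
  ip_dense_ran : Dense (Set.range fun f : ip.domain => ip f)
  im_dense_ran : Dense (Set.range fun g : im.domain => im g)
  riesz : ∀ g : im.domain, ∃ v : Hp,
    (∀ f : ip.domain, ⟪im g, ip f⟫ = ⟪v, (f : Hp)⟫) ∧ ‖v‖ = ‖(g : Hm)‖
  ran_im : ∀ (u : H₀) (v : Hp),
    (∀ f : ip.domain, ⟪u, ip f⟫ = ⟪v, (f : Hp)⟫) → ∃ g : im.domain, im g = u


open scoped NNReal
set_option synthInstance.maxHeartbeats 1000000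
set_option maxHeartbeats 2000000

section AuxLemmas

variable {Hp H₀ Hm : Type*}
    [NormedAddCommGroup Hp] [InnerProductSpace ℂ Hp] [CompleteSpace Hp]
    [NormedAddCommGroup H₀] [InnerProductSpace ℂ H₀] [CompleteSpace H₀]
    [NormedAddCommGroup Hm] [InnerProductSpace ℂ Hm] [CompleteSpace Hm]

lemma stmt17_aux_bijective (M : H₀ →L[ℂ] H₀) (c : ℝ) (hc : 0 < c)
    (hcM : ∀ x : H₀, c * ‖x‖ ^ 2 ≤ (⟪M x, x⟫).re) : Function.Bijective M := by
  have hlow : ∀ x : H₀, c * ‖x‖ ≤ ‖M x‖ := by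
    intro x
    rcases eq_or_ne x 0 with rfl | hx
    · simp
    · have h1 := hcM x
      have h2 : (⟪M x, x⟫).re ≤ ‖M x‖ * ‖x‖ := by
        refine le_trans (Complex.re_le_norm _) ?_
        simpa using norm_inner_le_norm (𝕜 := ℂ) (M x) x
      have hx0 : 0 < ‖x‖ := norm_pos_iff.2 hx
      nlinarith
  have hinj : Function.Injective M := by
    intro x y hxy
    have h0 : M (x - y) = 0 := by rw [map_sub, hxy, sub_self]
    have := hlow (x - y)
    rw [h0, norm_zero] at this
    have : ‖x - y‖ ≤ 0 := by nlinarith [norm_nonneg (x - y)]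
    rw [← sub_eq_zero]
    exact norm_le_zero_iff.1 this
  refine ⟨hinj, ?_⟩
  have hanti : AntilipschitzWith (⟨c, hc.le⟩ : ℝ≥0)⁻¹ M := by
    refine AddMonoidHomClass.antilipschitz_of_bound _ fun x => ?_
    have hcc : (((⟨c, hc.le⟩ : ℝ≥0)⁻¹ : ℝ≥0) : ℝ) = c⁻¹ := rfl
    rw [hcc]
    have h3 : ‖x‖ = c⁻¹ * (c * ‖x‖) := by field_simp
    rw [h3]
    exact mul_le_mul_of_nonneg_left (hlow x) (inv_pos.2 hc).le
  have hclosed : IsClosed (Set.range ⇑M) := hanti.isClosed_range M.uniformContinuous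
  set Kr : Submodule ℂ H₀ := LinearMap.range (M : H₀ →ₗ[ℂ] H₀) with hKr
  have hKrclosed : IsClosed (Kr : Set H₀) := by
    rw [hKr, LinearMap.coe_range]
    exact hclosed
  haveI : CompleteSpace Kr := hKrclosed.completeSpace_coe
  have hbot : Krᗮ = ⊥ := by
    rw [Submodule.eq_bot_iff]
    intro x hx
    have h0 : ⟪M x, x⟫ = 0 :=
      (Submodule.mem_orthogonal _ _).1 hx (M x) (LinearMap.mem_range_self (M : H₀ →ₗ[ℂ] H₀) x)
    have h1 := hcM x
    rw [h0, Complex.zero_re] at h1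
    have h2 : ‖x‖ ^ 2 ≤ 0 := by nlinarith
    have : ‖x‖ = 0 := by nlinarith [norm_nonneg x, sq_nonneg ‖x‖]
    exact norm_eq_zero.1 this
  have htop : Kr = ⊤ := Submodule.orthogonal_eq_bot_iff.1 hbot
  exact LinearMap.range_eq_top.1 htop

lemma stmt17_aux_surj (Q : QuasiGelfandTriple Hp H₀ Hm) (R : H₀ ≃L[ℂ] H₀)
    (hRsym : ∀ x y : H₀, ⟪R x, y⟫ = ⟪x, R y⟫)
    (M : H₀ →L[ℂ] H₀) (hMRR : ∀ x : H₀, M (R (R x)) = x) (z : H₀) :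
    ∃ (f : Q.ip.domain) (g : Q.im.domain), Q.ip f + M (Q.im g) = z := by
  classical
  set L : Q.ip.domain →ₗ[ℂ] WithLp 2 (Hp × H₀) :=
    (WithLp.linearEquiv 2 ℂ (Hp × H₀)).symm.toLinearMap.comp
      (LinearMap.prod Q.ip.domain.subtype
        ((R : H₀ →L[ℂ] H₀).toLinearMap.comp Q.ip.toFun)) with hLdef
  have hLfst : ∀ f : Q.ip.domain, (L f).fst = (f : Hp) := fun f => rfl
  have hLsnd : ∀ f : Q.ip.domain, (L f).snd = R (Q.ip f) := fun f => rfl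
  set K : Submodule ℂ (WithLp 2 (Hp × H₀)) := LinearMap.range L with hKdef
  have hKclosed : IsClosed (K : Set (WithLp 2 (Hp × H₀))) := by
    have himg : (K : Set (WithLp 2 (Hp × H₀))) =
        ⇑(WithLp.prodContinuousLinearEquiv 2 ℂ Hp H₀) ⁻¹'
          ((Homeomorph.prodCongr (Homeomorph.refl Hp) R.toHomeomorph) ''
            {p : Hp × H₀ | ∃ f : Q.ip.domain, (f : Hp) = p.1 ∧ Q.ip f = p.2}) := by
      ext x
      simp only [SetLike.mem_coe, hKdef, LinearMap.mem_range, Set.mem_preimage,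
        Set.mem_image]
      constructor
      · rintro ⟨f, rfl⟩
        exact ⟨((f : Hp), Q.ip f), ⟨f, rfl, rfl⟩, rfl⟩
      · rintro ⟨⟨b, y⟩, ⟨f, hb, hy⟩, h⟩
        refine ⟨f, ?_⟩
        have h1 : b = x.fst := congrArg Prod.fst h
        have h2 : R y = x.snd := congrArg Prod.snd h
        have : ((f : Hp), R (Q.ip f)) = ((x.fst : Hp), x.snd) := by
          rw [hb, hy, h1, h2]
        exact congrArg (WithLp.equiv 2 (Hp × H₀)).symm this
    rw [himg]
    exact ((Homeomorph.prodCongr (Homeomorph.refl Hp) R.toHomeomorph).isClosedMap _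
      Q.ip_closed).preimage (WithLp.prodContinuousLinearEquiv 2 ℂ Hp H₀).continuous
  haveI : CompleteSpace K := hKclosed.completeSpace_coe
  obtain ⟨y, hyK, q, hq, hdecomp⟩ :=
    K.exists_add_mem_mem_orthogonal ((WithLp.equiv 2 (Hp × H₀)).symm ((0 : Hp), R z))
  rw [hKdef, LinearMap.mem_range] at hyK
  obtain ⟨f, rfl⟩ := hyK
  have horth : ∀ f' : Q.ip.domain, ⟪Q.ip f', R (R (z - Q.ip f))⟫ = ⟪(f' : Hp), (f : Hp)⟫ := by
    intro f'
    have hmem : L f' ∈ K := LinearMap.mem_range_self L f'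
    have h0 : ⟪L f', q⟫ = 0 := (Submodule.mem_orthogonal _ _).1 hq (L f') hmem
    have hqeq : q = (WithLp.equiv 2 (Hp × H₀)).symm ((0 : Hp), R z) - L f := by
      rw [hdecomp]; abel
    rw [hqeq, inner_sub_right] at h0
    have hv1 : ⟪L f', (WithLp.equiv 2 (Hp × H₀)).symm ((0 : Hp), R z)⟫
        = ⟪R (Q.ip f'), R z⟫ := by
      rw [WithLp.prod_inner_apply]
      simp [hLfst, hLsnd]
    have hv2 : ⟪L f', L f⟫ = ⟪(f' : Hp), (f : Hp)⟫ + ⟪R (Q.ip f'), R (Q.ip f)⟫ := by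
      rw [WithLp.prod_inner_apply]; rfl
    rw [hv1, hv2] at h0
    have h1 : ⟪R (Q.ip f'), R z - R (Q.ip f)⟫ = ⟪(f' : Hp), (f : Hp)⟫ := by
      rw [inner_sub_right]
      linear_combination h0
    have h2 : R z - R (Q.ip f) = R (z - Q.ip f) := (map_sub R z (Q.ip f)).symm
    rw [h2, hRsym] at h1
    exact h1
  have hran : ∀ f' : Q.ip.domain, ⟪R (R (z - Q.ip f)), Q.ip f'⟫ = ⟪(f : Hp), (f' : Hp)⟫ := by
    intro f'
    have := congrArg (starRingEnd ℂ) (horth f')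
    rwa [inner_conj_symm, inner_conj_symm] at this
  obtain ⟨g, hg⟩ := Q.ran_im (R (R (z - Q.ip f))) (f : Hp) hran
  refine ⟨f, g, ?_⟩
  rw [hg, hMRR]
  abel

lemma stmt17_aux_closed (Q : QuasiGelfandTriple Hp H₀ Hm) (M : H₀ →L[ℂ] H₀)
    (c : ℝ) (hc : 0 < c) (hcM : ∀ x : H₀, c * ‖x‖ ^ 2 ≤ (⟪M x, x⟫).re) :
    IsClosed {p : (Hp × Hm) × H₀ | ∃ (f : Q.ip.domain) (g : Q.im.domain),
        (f : Hp) = p.1.1 ∧ (g : Hm) = p.1.2 ∧ Q.ip f + M (Q.im g) = p.2} := by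
  apply IsSeqClosed.isClosed
  intro x p hx hlim
  choose f g h1 h2 h3 using hx
  set W : ℕ → H₀ := fun n => Q.ip (f n) + M (Q.im (g n)) with hWdef
  set k : ℕ → H₀ := fun n => Q.im (g n) with hkdef
  have hfl : Tendsto (fun n => (f n : Hp)) atTop (𝓝 p.1.1) := by
    have h := ((continuous_fst.comp continuous_fst).tendsto p).comp hlim
    exact Tendsto.congr (fun n => (h1 n).symm) h
  have hgl : Tendsto (fun n => (g n : Hm)) atTop (𝓝 p.1.2) := by
    have h := ((continuous_snd.comp continuous_fst).tendsto p).comp hlim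
    exact Tendsto.congr (fun n => (h2 n).symm) h
  have hwl : Tendsto W atTop (𝓝 p.2) := by
    have h := (continuous_snd.tendsto p).comp hlim
    exact Tendsto.congr (fun n => (h3 n).symm) h
  have hfc : CauchySeq (fun n => (f n : Hp)) := hfl.cauchySeq
  have hgc : CauchySeq (fun n => (g n : Hm)) := hgl.cauchySeq
  have hwc : CauchySeq W := hwl.cauchySeq
  have key : ∀ n m : ℕ, c * ‖k n - k m‖ ^ 2 ≤
      ‖W n - W m‖ * ‖k n - k m‖ + ‖(g n : Hm) - (g m : Hm)‖ * ‖(f n : Hp) - (f m : Hp)‖ := by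
    intro n m
    have hkd : k n - k m = Q.im (g n - g m) := (Q.im.map_sub (g n) (g m)).symm
    have hhd : Q.ip (f n) - Q.ip (f m) = Q.ip (f n - f m) := (Q.ip.map_sub (f n) (f m)).symm
    have hMkd : M (k n - k m) = (W n - W m) - (Q.ip (f n) - Q.ip (f m)) := by
      simp only [hWdef, hkdef, map_sub]
      abel
    have F1 := hcM (k n - k m)
    have F2 : (⟪M (k n - k m), k n - k m⟫).re
        = (⟪W n - W m, k n - k m⟫).re - (⟪Q.ip (f n) - Q.ip (f m), k n - k m⟫).re := by
      rw [hMkd, inner_sub_left, Complex.sub_re]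
    have F3 : (⟪W n - W m, k n - k m⟫).re ≤ ‖W n - W m‖ * ‖k n - k m‖ := by
      refine le_trans (Complex.re_le_norm _) ?_
      exact norm_inner_le_norm (𝕜 := ℂ) (W n - W m) (k n - k m)
    have F4 : -(⟪Q.ip (f n) - Q.ip (f m), k n - k m⟫).re
        ≤ ‖(g n : Hm) - (g m : Hm)‖ * ‖(f n : Hp) - (f m : Hp)‖ := by
      obtain ⟨v, hv, hvnorm⟩ := Q.riesz (g n - g m)
      have e1 : ⟪k n - k m, Q.ip (f n) - Q.ip (f m)⟫ = ⟪v, ((f n - f m : Q.ip.domain) : Hp)⟫ := by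
        rw [hkd, hhd]; exact hv (f n - f m)
      have e2 : ‖⟪Q.ip (f n) - Q.ip (f m), k n - k m⟫‖
          = ‖⟪v, ((f n - f m : Q.ip.domain) : Hp)⟫‖ := by
        rw [← e1, ← inner_conj_symm (k n - k m), RCLike.norm_conj]
      have e3 : ‖⟪v, ((f n - f m : Q.ip.domain) : Hp)⟫‖
          ≤ ‖(g n : Hm) - (g m : Hm)‖ * ‖(f n : Hp) - (f m : Hp)‖ := by
        refine le_trans (norm_inner_le_norm _ _) ?_
        rw [hvnorm]
        simp
      have e4 : -(⟪Q.ip (f n) - Q.ip (f m), k n - k m⟫).re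
          ≤ ‖⟪Q.ip (f n) - Q.ip (f m), k n - k m⟫‖ := by
        exact (neg_le_abs _).trans (Complex.abs_re_le_norm _)
      exact le_trans e4 (e2 ▸ e3)
    linarith
  have hkc : CauchySeq k := by
    rw [Metric.cauchySeq_iff]
    intro ε hε
    have hε' : 0 < ε / 2 := by positivity
    have hδ2 : 0 < c * (ε / 2) ^ 2 / 2 := by positivity
    obtain ⟨N1, hN1⟩ := Metric.cauchySeq_iff.1 hwc (c * (ε / 2) / 2) (by positivity)
    obtain ⟨N2, hN2⟩ := Metric.cauchySeq_iff.1 hfc (Real.sqrt (c * (ε / 2) ^ 2 / 2))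
      (Real.sqrt_pos.2 hδ2)
    obtain ⟨N3, hN3⟩ := Metric.cauchySeq_iff.1 hgc (Real.sqrt (c * (ε / 2) ^ 2 / 2))
      (Real.sqrt_pos.2 hδ2)
    refine ⟨max N1 (max N2 N3), fun n hn m hm => ?_⟩
    have hn1 : n ≥ N1 := le_trans (le_max_left _ _) hn
    have hn2 : n ≥ N2 := le_trans (le_trans (le_max_left _ _) (le_max_right _ _)) hn
    have hn3 : n ≥ N3 := le_trans (le_trans (le_max_right _ _) (le_max_right _ _)) hn
    have hm1 : m ≥ N1 := le_trans (le_max_left _ _) hm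
    have hm2 : m ≥ N2 := le_trans (le_trans (le_max_left _ _) (le_max_right _ _)) hm
    have hm3 : m ≥ N3 := le_trans (le_trans (le_max_right _ _) (le_max_right _ _)) hm
    have hw : ‖W n - W m‖ < c * (ε / 2) / 2 := by
      rw [← dist_eq_norm]; exact hN1 n hn1 m hm1
    have hf' : ‖(f n : Hp) - (f m : Hp)‖ < Real.sqrt (c * (ε / 2) ^ 2 / 2) := by
      rw [← dist_eq_norm]; exact hN2 n hn2 m hm2
    have hg' : ‖(g n : Hm) - (g m : Hm)‖ < Real.sqrt (c * (ε / 2) ^ 2 / 2) := by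
      rw [← dist_eq_norm]; exact hN3 n hn3 m hm3
    have hprod : ‖(g n : Hm) - (g m : Hm)‖ * ‖(f n : Hp) - (f m : Hp)‖ < c * (ε / 2) ^ 2 / 2 := by
      have := mul_lt_mul'' hg' hf' (norm_nonneg _) (norm_nonneg _)
      rwa [Real.mul_self_sqrt hδ2.le] at this
    have hkey := key n m
    set t := ‖k n - k m‖ with htdef
    have ht0 : 0 ≤ t := norm_nonneg _
    have hq : c * t ^ 2 ≤ (c * (ε / 2) / 2) * t + c * (ε / 2) ^ 2 / 2 := by nlinarith
    have htle : t ≤ ε / 2 := by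
      by_contra hcon
      push_neg at hcon
      have h5 : 0 < t - ε / 2 := by linarith
      have h6 : 0 < t + ε / 2 / 2 := by linarith
      nlinarith [mul_pos (mul_pos hc h5) h6]
    rw [dist_eq_norm]
    exact lt_of_le_of_lt htle (by linarith)
  obtain ⟨kl, hkl⟩ := cauchySeq_tendsto_of_complete hkc
  have hhl : Tendsto (fun n => Q.ip (f n)) atTop (𝓝 (p.2 - M kl)) := by
    have h := hwl.sub ((M.continuous.tendsto kl).comp hkl)
    refine Tendsto.congr (fun n => ?_) h
    simp only [hWdef, Function.comp]
    abel
  have hfmem : (p.1.1, p.2 - M kl) ∈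
      {q : Hp × H₀ | ∃ f' : Q.ip.domain, (f' : Hp) = q.1 ∧ Q.ip f' = q.2} :=
    Q.ip_closed.isSeqClosed (fun n => ⟨f n, rfl, rfl⟩) (hfl.prodMk_nhds hhl)
  have hgmem : (p.1.2, kl) ∈
      {q : Hm × H₀ | ∃ g' : Q.im.domain, (g' : Hm) = q.1 ∧ Q.im g' = q.2} :=
    Q.im_closed.isSeqClosed (fun n => ⟨g n, rfl, rfl⟩) (hgl.prodMk_nhds hkl)
  obtain ⟨f0, hf0a, hf0b⟩ := hfmem
  obtain ⟨g0, hg0a, hg0b⟩ := hgmem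
  exact ⟨f0, g0, hf0a, hg0a, by rw [hf0b, hg0b]; exact sub_add_cancel _ _⟩

end AuxLemmas

/-- Let `M` be a bounded, strictly positive operator on the pivot space
`H₀` of a quasi Gelfand triple `(H₊, H₀, H₋)`.  Then `V₁ = I`, `V₂ = M` satisfy:
(i) the operator `[I|_{D₊}, M|_{D₋}] : H₊ × H₋ → H₀` is closed and surjective;
(ii) `ker [V₁ V₂] = {(x,y) : x = −My}` is a dissipative linear relation on `H₀`;
(iii) `V₁V₂* + V₂V₁* = 2 Re M ≥ 0`. -/
theorem stmt17 {Hp H₀ Hm : Type*}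
    [NormedAddCommGroup Hp] [InnerProductSpace ℂ Hp] [CompleteSpace Hp]
    [NormedAddCommGroup H₀] [InnerProductSpace ℂ H₀] [CompleteSpace H₀]
    [NormedAddCommGroup Hm] [InnerProductSpace ℂ Hm] [CompleteSpace Hm]
    (Q : QuasiGelfandTriple Hp H₀ Hm)
    (M : H₀ →L[ℂ] H₀) (hMsa : IsSelfAdjoint M)
    (hMpos : ∃ c : ℝ, 0 < c ∧ ∀ x : H₀, c * ‖x‖ ^ 2 ≤ (⟪M x, x⟫).re) :
    -- (i) `[I|_{D₊}, M|_{D₋}]` is closed and surjective: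
    (IsClosed {p : (Hp × Hm) × H₀ | ∃ (f : Q.ip.domain) (g : Q.im.domain),
        (f : Hp) = p.1.1 ∧ (g : Hm) = p.1.2 ∧ Q.ip f + M (Q.im g) = p.2} ∧
      ∀ z : H₀, ∃ (f : Q.ip.domain) (g : Q.im.domain), Q.ip f + M (Q.im g) = z) ∧
    -- (ii) the kernel relation is dissipative:
    (∀ x y : H₀, x = -(M y) → (⟪x, y⟫).re ≤ 0) ∧
    -- (iii) `V₁V₂* + V₂V₁* ≥ 0`:
    (∀ x : H₀, 0 ≤ (⟪(ContinuousLinearMap.adjoint M + M) x, x⟫).re) := by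
  obtain ⟨c, hc, hcM⟩ := hMpos
  have part2 : ∀ x y : H₀, x = -(M y) → (⟪x, y⟫).re ≤ 0 := by
    intro x y hxy
    subst hxy
    have h1 := hcM y
    rw [inner_neg_left, Complex.neg_re]
    nlinarith [norm_nonneg y, sq_nonneg ‖y‖]
  have hadj : ContinuousLinearMap.adjoint M = M := by
    rw [← ContinuousLinearMap.star_eq_adjoint]
    exact hMsa
  have part3 : ∀ x : H₀, 0 ≤ (⟪(ContinuousLinearMap.adjoint M + M) x, x⟫).re := by
    intro x
    rw [hadj]
    have h0 : (M + M) x = M x + M x := rfl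
    rw [h0, inner_add_left, Complex.add_re]
    nlinarith [hcM x, norm_nonneg x, sq_nonneg ‖x‖]
  have hM0 : 0 ≤ M := by
    rw [ContinuousLinearMap.nonneg_iff_isPositive]
    refine ⟨ContinuousLinearMap.isSelfAdjoint_iff_isSymmetric.mp hMsa, fun x => ?_⟩
    have : M.reApplyInnerSelf x = (⟪M x, x⟫).re := by
      simp [ContinuousLinearMap.reApplyInnerSelf, RCLike.re_to_complex]
    rw [this]
    exact le_trans (by positivity) (hcM x)
  set S : H₀ →L[ℂ] H₀ := CFC.sqrt M with hSdef
  have hSS : S * S = M := CFC.sqrt_mul_sqrt_self M hM0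
  have hSsa : IsSelfAdjoint S := (CFC.sqrt_nonneg (a := M)).isSelfAdjoint
  have hSapp : ∀ x : H₀, S (S x) = M x := by
    intro x
    rw [← hSS]
    rfl
  have hMbij : Function.Bijective M := stmt17_aux_bijective M c hc hcM
  have hSinj : Function.Injective S := by
    intro a b hab
    exact hMbij.1 (by rw [← hSapp, ← hSapp, hab])
  have hSsurj : Function.Surjective S := by
    intro y
    obtain ⟨w, hw⟩ := hMbij.2 y
    exact ⟨S w, by rw [hSapp, hw]⟩
  set Se : H₀ ≃L[ℂ] H₀ := ContinuousLinearEquiv.ofBijective S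
    (LinearMap.ker_eq_bot.2 hSinj) (LinearMap.range_eq_top.2 hSsurj) with hSedef
  have hSe_coe : ∀ x : H₀, Se x = S x := fun _ => rfl
  have hRS : ∀ x : H₀, S (Se.symm x) = x := by
    intro x
    have h := Se.apply_symm_apply x
    rwa [hSe_coe] at h
  have hsym := ContinuousLinearMap.isSelfAdjoint_iff_isSymmetric.mp hSsa
  have hRsym : ∀ x y : H₀, ⟪Se.symm x, y⟫ = ⟪x, Se.symm y⟫ := by
    intro x y
    calc ⟪Se.symm x, y⟫ = ⟪Se.symm x, S (Se.symm y)⟫ := by rw [hRS]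
    _ = ⟪S (Se.symm x), Se.symm y⟫ := (hsym _ _).symm
    _ = ⟪x, Se.symm y⟫ := by rw [hRS]
  have hMRR : ∀ x : H₀, M ((Se.symm) ((Se.symm) x)) = x := by
    intro x
    rw [← hSapp, hRS, hRS]
  exact ⟨⟨stmt17_aux_closed Q M c hc hcM,
    fun z => stmt17_aux_surj Q Se.symm hRsym M hMRR z⟩, part2, part3⟩
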